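/- Derivative along a propensity-score perturbation: define π_{1,δ}(x) := π₁(x) e^{δ l(x)} / ( π₁(x) e^{δ l(x)} + π₀(x) ) and π_{0,δ}(x) := 1 − π_{1,δ}(x), and ψ(δ) := ∫ [ m(x) π_{t,δ}(x) + r(x) π_{1−t,δ}(x) ] dF(x). Then ψ is differentiable at δ = 0 with ψ′(0) = (−1)^{t+1} ∫ ( m(x) − r(x) ) π₁(x) π₀(x) l(x) dF(x). In particular, for each x the map δ ↦ π_{1,δ}(x) has derivative π₁(x) π₀(x) l(x) at δ = 0. -/

import Mathlib

open MeasureTheory Real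

lemma pp_den_pos {a : ℝ} (ha : a ∈ Set.Ioo (0:ℝ) 1) (e : ℝ) (he : 0 < e) :
    0 < a * e + (1 - a) := by
  have := ha.1; have := ha.2; nlinarith

lemma pp_aux_deriv {a : ℝ} (ha : a ∈ Set.Ioo (0:ℝ) 1) (b δ : ℝ) :
    HasDerivAt (fun δ => a * Real.exp (δ * b) / (a * Real.exp (δ * b) + (1 - a)))
      (a * Real.exp (δ * b) * (1 - a) * b / (a * Real.exp (δ * b) + (1 - a))^2) δ := by
  have he : (0:ℝ) < Real.exp (δ * b) := Real.exp_pos _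
  have hd : 0 < a * Real.exp (δ * b) + (1 - a) := pp_den_pos ha _ he
  have hu : HasDerivAt (fun δ : ℝ => a * Real.exp (δ * b)) (a * (Real.exp (δ * b) * b)) δ := by
    have : HasDerivAt (fun δ : ℝ => Real.exp (δ * b)) (Real.exp (δ * b) * b) δ :=
      (hasDerivAt_mul_const b).exp
    exact this.const_mul a
  have hden : HasDerivAt (fun δ : ℝ => a * Real.exp (δ * b) + (1 - a))
      (a * (Real.exp (δ * b) * b)) δ := hu.add_const _
  have := hu.div hden (ne_of_gt hd)
  refine this.congr_deriv ?_
  ring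

lemma pp_g_mem {a : ℝ} (ha : a ∈ Set.Ioo (0:ℝ) 1) (e : ℝ) (he : 0 < e) :
    a * e / (a * e + (1 - a)) ∈ Set.Ioo (0:ℝ) 1 := by
  have hd : 0 < a * e + (1 - a) := pp_den_pos ha e he
  constructor
  · exact div_pos (mul_pos ha.1 he) hd
  · rw [div_lt_one hd]; nlinarith [ha.1, ha.2]

/-- Main helper: derivative of ∫ m·g + r·(1−g). -/
lemma pp_main {p : ℕ} (F : Measure (Fin p → ℝ)) [IsProbabilityMeasure F]
    (π1 : (Fin p → ℝ) → ℝ) (hπ1 : Measurable π1) (hπ1mem : ∀ x, π1 x ∈ Set.Ioo (0 : ℝ) 1)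
    (l : (Fin p → ℝ) → ℝ) (hl : Measurable l) (hl_bdd : ∃ C, ∀ x, |l x| ≤ C)
    (m r : (Fin p → ℝ) → ℝ) (hm_meas : Measurable m) (hr_meas : Measurable r)
    (hm_int : Integrable m F) (hr_int : Integrable r F) :
    HasDerivAt
      (fun δ : ℝ => ∫ x,
        (m x * (π1 x * Real.exp (δ * l x) / (π1 x * Real.exp (δ * l x) + (1 - π1 x))) +
         r x * (1 - π1 x * Real.exp (δ * l x) / (π1 x * Real.exp (δ * l x) + (1 - π1 x)))) ∂F)
      (∫ x, (m x - r x) * π1 x * (1 - π1 x) * l x ∂F) 0 := by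
  obtain ⟨C, hC⟩ := hl_bdd
  have hC0 : 0 ≤ C := le_trans (abs_nonneg _) (hC (fun _ => 0))
  set G : ℝ → (Fin p → ℝ) → ℝ := fun δ x =>
    π1 x * Real.exp (δ * l x) / (π1 x * Real.exp (δ * l x) + (1 - π1 x)) with hG
  set Fn : ℝ → (Fin p → ℝ) → ℝ := fun δ x => m x * G δ x + r x * (1 - G δ x) with hFn
  set Fn' : ℝ → (Fin p → ℝ) → ℝ := fun δ x =>
    (m x - r x) * (π1 x * Real.exp (δ * l x) * (1 - π1 x) * l x /
      (π1 x * Real.exp (δ * l x) + (1 - π1 x))^2) with hFn'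
  have hGmem : ∀ δ x, G δ x ∈ Set.Ioo (0:ℝ) 1 := fun δ x =>
    pp_g_mem (hπ1mem x) _ (Real.exp_pos _)
  have hGmeas : ∀ δ, Measurable (G δ) := by
    intro δ
    exact (hπ1.mul (measurable_const.mul hl).exp).div
      ((hπ1.mul (measurable_const.mul hl).exp).add (measurable_const.sub hπ1))
  have key := hasDerivAt_integral_of_dominated_loc_of_deriv_le
    (F := Fn) (F' := Fn') (x₀ := (0:ℝ)) (bound := fun x => (|m x| + |r x|) * (C / 4))
    (μ := F) (Metric.ball_mem_nhds (0:ℝ) zero_lt_one) ?_ ?_ ?_ ?_ ?_ ?_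
  · have h2 := key.2
    have : (∫ x, Fn' 0 x ∂F) = ∫ x, (m x - r x) * π1 x * (1 - π1 x) * l x ∂F := by
      apply integral_congr_ae
      filter_upwards with x
      simp only [hFn', zero_mul, Real.exp_zero, mul_one]
      have : π1 x + (1 - π1 x) = 1 := by ring
      rw [this]
      ring
    rwa [this] at h2
  · filter_upwards with δ
    exact ((hm_meas.mul (hGmeas δ)).add
      (hr_meas.mul (measurable_const.sub (hGmeas δ)))).aestronglyMeasurable
  · -- Integrable (Fn 0)
    apply (hm_int.abs.add hr_int.abs).mono
      (((hm_meas.mul (hGmeas 0)).add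
        (hr_meas.mul (measurable_const.sub (hGmeas 0)))).aestronglyMeasurable)
    filter_upwards with x
    have h := hGmem 0 x
    simp only [Real.norm_eq_abs, Pi.add_apply]
    rw [abs_of_nonneg (by positivity : (0:ℝ) ≤ |m x| + |r x|)]
    calc |m x * G 0 x + r x * (1 - G 0 x)| ≤ |m x * G 0 x| + |r x * (1 - G 0 x)| := abs_add_le _ _
      _ ≤ |m x| * 1 + |r x| * 1 := by
          rw [abs_mul, abs_mul]
          gcongr
          · rw [abs_of_nonneg h.1.le]; exact h.2.le
          · rw [abs_of_nonneg (show (0:ℝ) ≤ 1 - G 0 x by linarith [h.2])]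
            linarith [h.1]
      _ = |m x| + |r x| := by ring
  · exact ((hm_meas.sub hr_meas).mul
      ((((hπ1.mul (measurable_const.mul hl).exp).mul
        (measurable_const.sub hπ1)).mul hl).div
        (((hπ1.mul (measurable_const.mul hl).exp).add (measurable_const.sub hπ1)).pow
          measurable_const))).aestronglyMeasurable
  · -- bound
    filter_upwards with x δ hδ
    have hg := hGmem δ x
    have hd : 0 < π1 x * Real.exp (δ * l x) + (1 - π1 x) :=
      pp_den_pos (hπ1mem x) _ (Real.exp_pos _)
    have h2 : (1:ℝ) - G δ x = (1 - π1 x) / (π1 x * Real.exp (δ * l x) + (1 - π1 x)) := by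
      simp only [hG]
      field_simp
      ring
    have hkey : π1 x * Real.exp (δ * l x) * (1 - π1 x) /
        (π1 x * Real.exp (δ * l x) + (1 - π1 x))^2 = G δ x * (1 - G δ x) := by
      rw [h2]
      simp only [hG]
      rw [div_mul_div_comm, sq]
    have hgg : G δ x * (1 - G δ x) ≤ 1/4 := by nlinarith [hg.1, hg.2, sq_nonneg (G δ x - 1/2)]
    have hgg0 : 0 ≤ G δ x * (1 - G δ x) := mul_nonneg hg.1.le (by linarith [hg.2])
    simp only [hFn', Real.norm_eq_abs]
    have : π1 x * Real.exp (δ * l x) * (1 - π1 x) * l x /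
        (π1 x * Real.exp (δ * l x) + (1 - π1 x))^2 = (G δ x * (1 - G δ x)) * l x := by
      rw [← hkey]; ring
    rw [this, abs_mul, abs_mul, abs_of_nonneg hgg0]
    have h1 : |m x - r x| ≤ |m x| + |r x| := abs_sub _ _
    have hlc : |l x| ≤ C := hC x
    calc |m x - r x| * (G δ x * (1 - G δ x) * |l x|)
        ≤ (|m x| + |r x|) * (G δ x * (1 - G δ x) * |l x|) :=
          mul_le_mul_of_nonneg_right h1 (mul_nonneg hgg0 (abs_nonneg _))
      _ ≤ (|m x| + |r x|) * (1/4 * C) := by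
          apply mul_le_mul_of_nonneg_left _ (by positivity)
          exact mul_le_mul hgg hlc (abs_nonneg _) (by norm_num)
      _ = (|m x| + |r x|) * (C / 4) := by ring
  · exact (hm_int.abs.add hr_int.abs).mul_const _
  · -- differentiability
    filter_upwards with x δ hδ
    have h := pp_aux_deriv (hπ1mem x) (l x) δ
    have h1 : HasDerivAt (fun δ => Fn δ x)
        (m x * (π1 x * Real.exp (δ * l x) * (1 - π1 x) * l x /
          (π1 x * Real.exp (δ * l x) + (1 - π1 x))^2)
         + r x * (0 - (π1 x * Real.exp (δ * l x) * (1 - π1 x) * l x /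
          (π1 x * Real.exp (δ * l x) + (1 - π1 x))^2))) δ :=
      (h.const_mul (m x)).add (((hasDerivAt_const δ (1:ℝ)).sub h).const_mul (r x))
    refine h1.congr_deriv ?_
    simp only [hFn']
    ring

/-- Derivative along a propensity-score perturbation: with
`π_{1,δ}(x) = π₁(x)e^{δl(x)}/(π₁(x)e^{δl(x)} + π₀(x))`, `π_{0,δ} = 1 − π_{1,δ}`, and
`ψ(δ) = ∫ (m·π_{t,δ} + r·π_{1−t,δ}) dF`, the map `ψ` is differentiable at `δ = 0` with
`ψ′(0) = (−1)^{t+1} ∫ (m − r) π₁ π₀ l dF`; and for each `x`, `δ ↦ π_{1,δ}(x)` has derivative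
`π₁(x)π₀(x)l(x)` at `δ = 0`. -/
theorem propensity_perturbation_derivative
    {p : ℕ} (F : Measure (Fin p → ℝ)) [IsProbabilityMeasure F]
    (t : ℕ) (ht : t = 0 ∨ t = 1)
    (π1 : (Fin p → ℝ) → ℝ) (hπ1 : Measurable π1) (hπ1mem : ∀ x, π1 x ∈ Set.Ioo (0 : ℝ) 1)
    (l : (Fin p → ℝ) → ℝ) (hl : Measurable l) (hl_bdd : ∃ C, ∀ x, |l x| ≤ C)
    (m r : (Fin p → ℝ) → ℝ) (hm_meas : Measurable m) (hr_meas : Measurable r)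
    (hm_int : Integrable m F) (hr_int : Integrable r F) :
    HasDerivAt
      (fun δ : ℝ => ∫ x,
        (m x * (if t = 1 then
            π1 x * Real.exp (δ * l x) / (π1 x * Real.exp (δ * l x) + (1 - π1 x))
          else
            1 - π1 x * Real.exp (δ * l x) / (π1 x * Real.exp (δ * l x) + (1 - π1 x))) +
         r x * (if t = 1 then
            1 - π1 x * Real.exp (δ * l x) / (π1 x * Real.exp (δ * l x) + (1 - π1 x))
          else
            π1 x * Real.exp (δ * l x) / (π1 x * Real.exp (δ * l x) + (1 - π1 x)))) ∂F)
      ((-1 : ℝ) ^ (t + 1) * ∫ x, (m x - r x) * π1 x * (1 - π1 x) * l x ∂F)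
      0 ∧
    ∀ x, HasDerivAt
      (fun δ : ℝ => π1 x * Real.exp (δ * l x) / (π1 x * Real.exp (δ * l x) + (1 - π1 x)))
      (π1 x * (1 - π1 x) * l x) 0 := by
  have hx : ∀ x, HasDerivAt
      (fun δ : ℝ => π1 x * Real.exp (δ * l x) / (π1 x * Real.exp (δ * l x) + (1 - π1 x)))
      (π1 x * (1 - π1 x) * l x) 0 := by
    intro x
    have h := pp_aux_deriv (hπ1mem x) (l x) 0
    have he : π1 x * Real.exp (0 * l x) + (1 - π1 x) = 1 := by
      rw [zero_mul, Real.exp_zero]; ring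
    convert h using 1
    rw [he]
    simp [Real.exp_zero]
  refine ⟨?_, hx⟩
  rcases ht with h0 | h1
  · subst h0
    simp only [if_neg (by norm_num : ¬(0:ℕ) = 1)]
    have key := pp_main F π1 hπ1 hπ1mem l hl hl_bdd r m hr_meas hm_meas hr_int hm_int
    have hfe : (fun δ : ℝ => ∫ x,
        (m x * (1 - π1 x * Real.exp (δ * l x) / (π1 x * Real.exp (δ * l x) + (1 - π1 x))) +
         r x * (π1 x * Real.exp (δ * l x) / (π1 x * Real.exp (δ * l x) + (1 - π1 x)))) ∂F)
        = (fun δ : ℝ => ∫ x,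
        (r x * (π1 x * Real.exp (δ * l x) / (π1 x * Real.exp (δ * l x) + (1 - π1 x))) +
         m x * (1 - π1 x * Real.exp (δ * l x) / (π1 x * Real.exp (δ * l x) + (1 - π1 x)))) ∂F) := by
      funext δ
      exact integral_congr_ae (by filter_upwards with x; ring)
    have hde : ((-1 : ℝ) ^ (0 + 1) * ∫ x, (m x - r x) * π1 x * (1 - π1 x) * l x ∂F)
        = ∫ x, (r x - m x) * π1 x * (1 - π1 x) * l x ∂F := by
      rw [pow_one, neg_one_mul, ← integral_neg]
      exact integral_congr_ae (by filter_upwards with x; ring)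
    rw [hfe, hde]
    exact key
  · subst h1
    simp only [if_pos rfl]
    have key := pp_main F π1 hπ1 hπ1mem l hl hl_bdd m r hm_meas hr_meas hm_int hr_int
    have hde : ((-1 : ℝ) ^ (1 + 1) * ∫ x, (m x - r x) * π1 x * (1 - π1 x) * l x ∂F)
        = ∫ x, (m x - r x) * π1 x * (1 - π1 x) * l x ∂F := by norm_num
    rw [hde]
    exact key
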